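/- Let γ_min, γ_max > 0, L₀ ≥ 0, let A ∈ ℝ^{r×n} and B ∈ ℝ^{m×r} satisfy γ_min·I ⪯ AAᵀ ⪯ γ_max·I and γ_min·I ⪯ BᵀB ⪯ γ_max·I, and let G ∈ ℝ^{m×n} with ‖G‖_F ≤ L₀. Set H := AAᵀ + BᵀB. If X ∈ ℝ^{r×r} solves the Sylvester equation H·X + X·H = (BᵀB)⁻¹BᵀGAᵀ + AGᵀB(BᵀB)⁻¹, then ‖X‖_F ≤ L₀·√γ_max / (2·γ_min^{3/2}). -/

import Mathlib

open Matrix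

/-- Frobenius norm of a real matrix. -/
noncomputable def frobNorm {m n : ℕ} (A : Matrix (Fin m) (Fin n) ℝ) : ℝ :=
  Real.sqrt (∑ i, ∑ j, (A i j) ^ 2)


lemma final_arith {γ st K : ℝ} (hγ : 0 < γ) (hst : 0 < st) (hK : 0 ≤ K)
    (h : 4 * γ * st ^ 2 ≤ 2 * st * K) : st ≤ K / (2 * γ) := by
  rw [le_div_iff₀ (by positivity)]
  nlinarith



set_option linter.unusedVariables false

lemma isHerm_of_t {k : ℕ} {M : Matrix (Fin k) (Fin k) ℝ} (h : Mᵀ = M) : M.IsHermitian := by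
  rw [Matrix.IsHermitian, conjTranspose_eq_transpose_of_trivial, h]

lemma dot_self_nonneg {k : ℕ} (v : Fin k → ℝ) : (0:ℝ) ≤ v ⬝ᵥ v :=
  Finset.sum_nonneg fun i _ => mul_self_nonneg _

lemma dot_cs {k : ℕ} (v w : Fin k → ℝ) : (v ⬝ᵥ w)^2 ≤ (v ⬝ᵥ v) * (w ⬝ᵥ w) := by
  simpa [dotProduct, sq] using Finset.sum_mul_sq_le_sq_mul_sq Finset.univ v w

lemma trace_tmul_self {a b : ℕ} (A : Matrix (Fin a) (Fin b) ℝ) :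
    (Aᵀ * A).trace = ∑ i, ∑ j, (A i j)^2 := by
  simp [Matrix.trace, Matrix.diag, Matrix.mul_apply, sq]
  rw [Finset.sum_comm]

lemma trace_tmul_self_nonneg {a b : ℕ} (A : Matrix (Fin a) (Fin b) ℝ) :
    0 ≤ (Aᵀ * A).trace := by
  rw [trace_tmul_self]
  exact Finset.sum_nonneg fun i _ => Finset.sum_nonneg fun j _ => sq_nonneg _

lemma psd_trace_nonneg {k : ℕ} {P : Matrix (Fin k) (Fin k) ℝ} (h : P.PosSemidef) :
    0 ≤ P.trace := by
  obtain ⟨C, hC⟩ : ∃ C : Matrix (Fin k) (Fin k) ℝ, P = Cᴴ * C := by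
    open scoped MatrixOrder in exact CStarAlgebra.nonneg_iff_eq_star_mul_self.mp h.nonneg
  rw [hC, conjTranspose_eq_transpose_of_trivial]
  exact trace_tmul_self_nonneg C

lemma psd_trace_mul_nonneg {k : ℕ} {P Q : Matrix (Fin k) (Fin k) ℝ}
    (hP : P.PosSemidef) (hQ : Q.PosSemidef) : 0 ≤ (P * Q).trace := by
  obtain ⟨C, hC⟩ : ∃ C : Matrix (Fin k) (Fin k) ℝ, P = Cᴴ * C := by
    open scoped MatrixOrder in exact CStarAlgebra.nonneg_iff_eq_star_mul_self.mp hP.nonneg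
  have h1 : P * Q = Cᴴ * (C * Q) := by rw [hC, Matrix.mul_assoc]
  rw [h1, Matrix.trace_mul_comm]
  exact psd_trace_nonneg (hQ.mul_mul_conjTranspose_same C)

-- trace bound: P ⪯ c•1, S psd → tr (P*S) ≤ c * tr S

lemma trace_mul_le {k : ℕ} {P S : Matrix (Fin k) (Fin k) ℝ} {c : ℝ}
    (hP : (c • (1:Matrix (Fin k) (Fin k) ℝ) - P).PosSemidef) (hS : S.PosSemidef) :
    (P * S).trace ≤ c * S.trace := by
  have h := psd_trace_mul_nonneg hP hS
  rw [Matrix.sub_mul, Matrix.trace_sub, Matrix.smul_mul, Matrix.one_mul, Matrix.trace_smul] at h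
  simpa using sub_nonneg.mp h

lemma trace_mul_ge {k : ℕ} {P S : Matrix (Fin k) (Fin k) ℝ} {c : ℝ}
    (hP : (P - c • (1:Matrix (Fin k) (Fin k) ℝ)).PosSemidef) (hS : S.PosSemidef) :
    c * S.trace ≤ (P * S).trace := by
  have h := psd_trace_mul_nonneg hP hS
  rw [Matrix.sub_mul, Matrix.trace_sub, Matrix.smul_mul, Matrix.one_mul, Matrix.trace_smul] at h
  simpa using sub_nonneg.mp h

lemma quad_le_of_psd {k : ℕ} {Q : Matrix (Fin k) (Fin k) ℝ} {c : ℝ}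
    (h : (c • (1:Matrix (Fin k) (Fin k) ℝ) - Q).PosSemidef) (x : Fin k → ℝ) :
    x ⬝ᵥ (Q *ᵥ x) ≤ c * (x ⬝ᵥ x) := by
  have h2 := h.dotProduct_mulVec_nonneg x
  simp [Matrix.sub_mulVec, Matrix.smul_mulVec, Matrix.one_mulVec, dotProduct_sub,
    dotProduct_smul, smul_eq_mul] at h2
  linarith

lemma quad_ge_of_psd {k : ℕ} {Q : Matrix (Fin k) (Fin k) ℝ} {c : ℝ}
    (h : (Q - c • (1:Matrix (Fin k) (Fin k) ℝ)).PosSemidef) (x : Fin k → ℝ) :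
    c * (x ⬝ᵥ x) ≤ x ⬝ᵥ (Q *ᵥ x) := by
  have h2 := h.dotProduct_mulVec_nonneg x
  simp [Matrix.sub_mulVec, Matrix.smul_mulVec, Matrix.one_mulVec, dotProduct_sub,
    dotProduct_smul, smul_eq_mul] at h2
  linarith

lemma psd_of_quad {k : ℕ} {Q : Matrix (Fin k) (Fin k) ℝ} {c : ℝ} (hQ : Qᵀ = Q)
    (h : ∀ x, x ⬝ᵥ (Q *ᵥ x) ≤ c * (x ⬝ᵥ x)) :
    (c • (1:Matrix (Fin k) (Fin k) ℝ) - Q).PosSemidef := by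
  refine Matrix.PosSemidef.of_dotProduct_mulVec_nonneg ?_ ?_
  · exact isHerm_of_t (by rw [transpose_sub, transpose_smul, transpose_one, hQ])
  · intro x
    have h2 := h x
    simp [Matrix.sub_mulVec, Matrix.smul_mulVec, Matrix.one_mulVec, dotProduct_sub,
      dotProduct_smul, smul_eq_mul]
    linarith

lemma symm_move {k l : ℕ} (M : Matrix (Fin k) (Fin l) ℝ) (u : Fin l → ℝ) (v : Fin k → ℝ) :
    u ⬝ᵥ (Mᵀ *ᵥ v) = (M *ᵥ u) ⬝ᵥ v := by
  rw [Matrix.dotProduct_mulVec, Matrix.vecMul_transpose]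

lemma transfer {a b : ℕ} {A : Matrix (Fin a) (Fin b) ℝ} {c : ℝ} (hc : 0 ≤ c)
    (h : (c • (1:Matrix (Fin a) (Fin a) ℝ) - A * Aᵀ).PosSemidef) :
    (c • (1 : Matrix (Fin b) (Fin b) ℝ) - Aᵀ * A).PosSemidef := by
  apply psd_of_quad (by rw [transpose_mul, transpose_transpose])
  intro x
  set y := A *ᵥ x with hy
  have h1 : x ⬝ᵥ ((Aᵀ * A) *ᵥ x) = y ⬝ᵥ y := by
    rw [← Matrix.mulVec_mulVec, symm_move, ← hy]
  rw [h1]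
  set z := Aᵀ *ᵥ y with hz
  have h2 : y ⬝ᵥ y = x ⬝ᵥ z := by
    rw [hz, symm_move, ← hy]
  have h3 : z ⬝ᵥ z = y ⬝ᵥ ((A * Aᵀ) *ᵥ y) := by
    rw [← Matrix.mulVec_mulVec, hz, symm_move, dotProduct_comm]
  have h4 : y ⬝ᵥ ((A * Aᵀ) *ᵥ y) ≤ c * (y ⬝ᵥ y) := quad_le_of_psd h y
  have h5 := dot_cs x z
  have hyy := dot_self_nonneg y
  have hxx := dot_self_nonneg x
  rcases eq_or_lt_of_le hyy with h0 | h0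
  · rw [← h0]; positivity
  · nlinarith [dot_self_nonneg z]

lemma proj_bound {m r : ℕ} (B : Matrix (Fin m) (Fin r) ℝ) {γ : ℝ} (hγ : 0 < γ)
    (hB : (Bᵀ * B - γ • (1:Matrix (Fin r) (Fin r) ℝ)).PosSemidef) :
    (γ⁻¹ • (1 : Matrix (Fin m) (Fin m) ℝ) - B * (Bᵀ*B)⁻¹ * (Bᵀ*B)⁻¹ * Bᵀ).PosSemidef := by
  set P := Bᵀ * B with hP
  have hPt : Pᵀ = P := by rw [hP, transpose_mul, transpose_transpose]
  have hPD : P.PosDef := by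
    refine Matrix.posDef_iff_dotProduct_mulVec.mpr ⟨isHerm_of_t hPt, fun x hx => ?_⟩
    have h1 : (0:ℝ) < x ⬝ᵥ x := by
      have := Matrix.dotProduct_star_self_pos_iff (v := x)
      simpa using this.mpr hx
    have := quad_ge_of_psd hB x
    simpa using lt_of_lt_of_le (mul_pos hγ h1) this
  have hdet : IsUnit P.det := hPD.det_pos.ne'.isUnit
  have hPinv : P * P⁻¹ = 1 := Matrix.mul_nonsing_inv P hdet
  have hinvP : P⁻¹ * P = 1 := Matrix.nonsing_inv_mul P hdet
  have hPit : P⁻¹ᵀ = P⁻¹ := by rw [Matrix.transpose_nonsing_inv, hPt]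
  apply psd_of_quad
  · simp [transpose_mul, transpose_transpose, hPit, Matrix.mul_assoc]
  · intro x
    set y := P⁻¹ *ᵥ (Bᵀ *ᵥ x) with hy
    have hPy : P *ᵥ y = Bᵀ *ᵥ x := by
      rw [hy, Matrix.mulVec_mulVec, hPinv, Matrix.one_mulVec]
    have e1 : x ⬝ᵥ ((B * P⁻¹ * P⁻¹ * Bᵀ) *ᵥ x) = y ⬝ᵥ y := by
      have hv : (B * P⁻¹ * P⁻¹ * Bᵀ) *ᵥ x = B *ᵥ (P⁻¹ *ᵥ y) := by
        rw [hy]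
        simp only [← Matrix.mulVec_mulVec]
      rw [hv, ← transpose_transpose B, symm_move Bᵀ x (P⁻¹ *ᵥ y),
        ← hPy, ← symm_move P y (P⁻¹ *ᵥ y), hPt, Matrix.mulVec_mulVec, hPinv,
        Matrix.one_mulVec]
    rw [e1]
    set s := y ⬝ᵥ (P *ᵥ y) with hs
    have h2 : γ * (y ⬝ᵥ y) ≤ s := quad_ge_of_psd hB y
    have h3 : s = (B *ᵥ y) ⬝ᵥ x := by
      rw [hs, hPy, symm_move]
    have h4 : s = (B *ᵥ y) ⬝ᵥ (B *ᵥ y) := by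
      rw [hs, hP, ← Matrix.mulVec_mulVec, symm_move]
    have h5 := dot_cs (B *ᵥ y) x
    rw [← h3, ← h4] at h5
    have hs0 : 0 ≤ s := h4 ▸ dot_self_nonneg _
    have hxx := dot_self_nonneg x
    have hyy := dot_self_nonneg y
    rcases hs0.eq_or_lt with h0 | h0
    · have : y ⬝ᵥ y ≤ 0 := by nlinarith
      have : y ⬝ᵥ y = 0 := le_antisymm this hyy
      rw [this]; positivity
    · have hsx : s ≤ x ⬝ᵥ x := by nlinarith
      have hkey : γ * (y ⬝ᵥ y) ≤ x ⬝ᵥ x := le_trans h2 hsx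
      calc y ⬝ᵥ y = γ⁻¹ * (γ * (y ⬝ᵥ y)) := by
            rw [← mul_assoc, inv_mul_cancel₀ hγ.ne', one_mul]
        _ ≤ γ⁻¹ * (x ⬝ᵥ x) := mul_le_mul_of_nonneg_left hkey (inv_pos.mpr hγ).le

lemma trace_cs {a b : ℕ} (A B : Matrix (Fin a) (Fin b) ℝ) :
    ((Aᵀ * B).trace)^2 ≤ (Aᵀ * A).trace * (Bᵀ * B).trace := by
  have key : ∀ (C D : Matrix (Fin a) (Fin b) ℝ),
      (Cᵀ * D).trace = ∑ p : Fin a × Fin b, C p.1 p.2 * D p.1 p.2 := by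
    intro C D
    rw [Fintype.sum_prod_type]
    simp only [Matrix.trace, Matrix.diag, Matrix.mul_apply, Matrix.transpose_apply]
    rw [Finset.sum_comm]
  rw [key, key, key]
  simpa [sq] using Finset.sum_mul_sq_le_sq_mul_sq Finset.univ
    (fun p : Fin a × Fin b => A p.1 p.2) (fun p => B p.1 p.2)

lemma le_sqrt_mul {a t u : ℝ} (h : a^2 ≤ t * u) (ht : 0 ≤ t) :
    a ≤ Real.sqrt t * Real.sqrt u := by
  calc a ≤ |a| := le_abs_self a
    _ = Real.sqrt (a^2) := (Real.sqrt_sq_eq_abs a).symm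
    _ ≤ Real.sqrt (t*u) := Real.sqrt_le_sqrt h
    _ = Real.sqrt t * Real.sqrt u := Real.sqrt_mul ht u

/-- Boundedness of the solution of the ODELoRA Sylvester equation under
eigenvalue bounds on `A Aᵀ` and `Bᵀ B` and a gradient bound `‖G‖_F ≤ L₀`. -/
theorem sylvester_solution_bound {m n r : ℕ}
    (γmin γmax L₀ : ℝ) (hγmin : 0 < γmin) (hγmax : 0 < γmax) (hL₀ : 0 ≤ L₀)
    (A : Matrix (Fin r) (Fin n) ℝ) (B : Matrix (Fin m) (Fin r) ℝ)
    (hA1 : (A * Aᵀ - γmin • (1 : Matrix (Fin r) (Fin r) ℝ)).PosSemidef)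
    (hA2 : (γmax • (1 : Matrix (Fin r) (Fin r) ℝ) - A * Aᵀ).PosSemidef)
    (hB1 : (Bᵀ * B - γmin • (1 : Matrix (Fin r) (Fin r) ℝ)).PosSemidef)
    (hB2 : (γmax • (1 : Matrix (Fin r) (Fin r) ℝ) - Bᵀ * B).PosSemidef)
    (G : Matrix (Fin m) (Fin n) ℝ) (hG : frobNorm G ≤ L₀)
    (X : Matrix (Fin r) (Fin r) ℝ)
    (hX : (A * Aᵀ + Bᵀ * B) * X + X * (A * Aᵀ + Bᵀ * B)
        = (Bᵀ * B)⁻¹ * Bᵀ * G * Aᵀ + A * Gᵀ * B * (Bᵀ * B)⁻¹) :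
    frobNorm X ≤ L₀ * Real.sqrt γmax / (2 * γmin ^ ((3:ℝ)/2)) := by
  -- basic facts about P = Bᵀ B
  have hPt : (Bᵀ * B)ᵀ = Bᵀ * B := by rw [transpose_mul, transpose_transpose]
  have hPD : (Bᵀ * B).PosDef := by
    refine Matrix.posDef_iff_dotProduct_mulVec.mpr ⟨isHerm_of_t hPt, fun x hx => ?_⟩
    have h1 : (0:ℝ) < x ⬝ᵥ x := by
      simpa using (Matrix.dotProduct_star_self_pos_iff (v := x)).mpr hx
    have h2 := quad_ge_of_psd hB1 x
    simpa using lt_of_lt_of_le (mul_pos hγmin h1) h2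
  have hdet : IsUnit (Bᵀ * B).det := hPD.det_pos.ne'.isUnit
  have hPit : (Bᵀ * B)⁻¹ᵀ = (Bᵀ * B)⁻¹ := by rw [Matrix.transpose_nonsing_inv, hPt]
  set Y := (Bᵀ * B)⁻¹ * Bᵀ * G * Aᵀ with hYdef
  have hYt : Yᵀ = A * Gᵀ * B * (Bᵀ * B)⁻¹ := by
    rw [hYdef]
    simp [transpose_mul, transpose_transpose, hPit, Matrix.mul_assoc]
  set t := (Xᵀ * X).trace with htdef
  set u := (Yᵀ * Y).trace with hudef
  have ht0 : 0 ≤ t := trace_tmul_self_nonneg X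
  have hu0 : 0 ≤ u := trace_tmul_self_nonneg Y
  -- Step 1 : 4 γmin t ≤ tr(Xᵀ Y) + tr(Xᵀ Yᵀ)
  have hH2 : ((A*Aᵀ + Bᵀ*B) - (2*γmin) • (1 : Matrix (Fin r) (Fin r) ℝ)).PosSemidef := by
    have hsum := hA1.add hB1
    have e : (A*Aᵀ + Bᵀ*B) - (2*γmin) • (1:Matrix (Fin r) (Fin r) ℝ)
        = (A*Aᵀ - γmin • 1) + (Bᵀ*B - γmin • 1) := by
      rw [two_mul, add_smul]; abel
    rw [e]; exact hsum
  have hXXt : (X * Xᵀ).PosSemidef := by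
    simpa [conjTranspose_eq_transpose_of_trivial] using
      Matrix.posSemidef_self_mul_conjTranspose X
  have hXtX : (Xᵀ * X).PosSemidef := by
    simpa [conjTranspose_eq_transpose_of_trivial] using
      Matrix.posSemidef_conjTranspose_mul_self X
  have e1 : (Xᵀ * ((A*Aᵀ + Bᵀ*B) * X)).trace = ((A*Aᵀ + Bᵀ*B) * (X * Xᵀ)).trace := by
    rw [← Matrix.mul_assoc, Matrix.trace_mul_comm, ← Matrix.mul_assoc, Matrix.trace_mul_comm]
  have e2 : (Xᵀ * (X * (A*Aᵀ + Bᵀ*B))).trace = ((A*Aᵀ + Bᵀ*B) * (Xᵀ * X)).trace := by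
    rw [← Matrix.mul_assoc, Matrix.trace_mul_comm]
  have hXXtr : (X * Xᵀ).trace = t := by rw [htdef, Matrix.trace_mul_comm]
  have s1a : (2*γmin) * (X * Xᵀ).trace ≤ ((A*Aᵀ + Bᵀ*B) * (X * Xᵀ)).trace :=
    trace_mul_ge hH2 hXXt
  have s1b : (2*γmin) * t ≤ ((A*Aᵀ + Bᵀ*B) * (Xᵀ * X)).trace := trace_mul_ge hH2 hXtX
  have big : 4 * γmin * t ≤ (Xᵀ * Y).trace + (Xᵀ * Yᵀ).trace := by
    have h : (Xᵀ * ((A*Aᵀ+Bᵀ*B) * X)).trace + (Xᵀ * (X * (A*Aᵀ+Bᵀ*B))).trace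
        = (Xᵀ * Y).trace + (Xᵀ * Yᵀ).trace := by
      rw [← Matrix.trace_add, ← Matrix.mul_add, hX, Matrix.mul_add, Matrix.trace_add, hYt]
    rw [e1, e2] at h
    rw [hXXtr] at s1a
    linarith
  -- Cauchy-Schwarz steps
  have cs1 : (Xᵀ * Y).trace ≤ Real.sqrt t * Real.sqrt u := le_sqrt_mul (trace_cs X Y) ht0
  have hYYt : (Y * Yᵀ).trace = u := by rw [hudef, Matrix.trace_mul_comm]
  have cs2 : (Xᵀ * Yᵀ).trace ≤ Real.sqrt t * Real.sqrt u := by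
    have h := trace_cs X Yᵀ
    rw [transpose_transpose, hYYt] at h
    exact le_sqrt_mul h ht0
  -- Step 3 : bound u
  have hg : (Gᵀ * G).trace ≤ L₀^2 := by
    have h1 : Real.sqrt ((Gᵀ * G).trace) ≤ L₀ := by
      rw [trace_tmul_self]; exact hG
    have h0 := trace_tmul_self_nonneg G
    calc (Gᵀ * G).trace = (Real.sqrt ((Gᵀ * G).trace))^2 := (Real.sq_sqrt h0).symm
      _ ≤ L₀^2 := pow_le_pow_left₀ (Real.sqrt_nonneg _) h1 2
  set W := (Bᵀ * B)⁻¹ * Bᵀ * G with hWdef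
  have hWt : Wᵀ = Gᵀ * B * (Bᵀ * B)⁻¹ := by
    rw [hWdef]; simp [transpose_mul, transpose_transpose, hPit, Matrix.mul_assoc]
  have hWtW : (Wᵀ * W).PosSemidef := by
    simpa [conjTranspose_eq_transpose_of_trivial] using
      Matrix.posSemidef_conjTranspose_mul_self W
  have hYW : Y = W * Aᵀ := by rw [hYdef, hWdef]
  have stepA : (Y * Yᵀ).trace = ((Aᵀ*A) * (Wᵀ*W)).trace := by
    rw [hYW, transpose_mul, transpose_transpose]
    have h1 : W * Aᵀ * (A * Wᵀ) = W * (Aᵀ * A * Wᵀ) := by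
      simp only [Matrix.mul_assoc]
    rw [h1, Matrix.trace_mul_comm]
    simp only [Matrix.mul_assoc]
  have stepAle : ((Aᵀ*A) * (Wᵀ*W)).trace ≤ γmax * (Wᵀ*W).trace :=
    trace_mul_le (transfer hγmax.le hA2) hWtW
  have hGGt : (G * Gᵀ).PosSemidef := by
    simpa [conjTranspose_eq_transpose_of_trivial] using
      Matrix.posSemidef_self_mul_conjTranspose G
  have stepB : (Wᵀ * W).trace = ((B * (Bᵀ*B)⁻¹ * (Bᵀ*B)⁻¹ * Bᵀ) * (G * Gᵀ)).trace := by
    rw [hWt, hWdef]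
    simp only [Matrix.mul_assoc]
    rw [Matrix.trace_mul_comm (Gᵀ)]
    simp only [Matrix.mul_assoc]
  have hM0 := proj_bound B hγmin hB1
  have stepBle : ((B * (Bᵀ*B)⁻¹ * (Bᵀ*B)⁻¹ * Bᵀ) * (G * Gᵀ)).trace
      ≤ γmin⁻¹ * (G * Gᵀ).trace := trace_mul_le hM0 hGGt
  have hGtr : (G * Gᵀ).trace = (Gᵀ * G).trace := Matrix.trace_mul_comm G Gᵀ
  have hu : u ≤ γmax * (γmin⁻¹ * L₀^2) := by
    have c1 : u = ((Aᵀ*A) * (Wᵀ*W)).trace := by rw [← hYYt, stepA]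
    have c2 : (Wᵀ*W).trace ≤ γmin⁻¹ * L₀^2 := by
      rw [stepB]
      calc ((B * (Bᵀ*B)⁻¹ * (Bᵀ*B)⁻¹ * Bᵀ) * (G * Gᵀ)).trace
          ≤ γmin⁻¹ * (G * Gᵀ).trace := stepBle
        _ = γmin⁻¹ * (Gᵀ * G).trace := by rw [hGtr]
        _ ≤ γmin⁻¹ * L₀^2 := mul_le_mul_of_nonneg_left hg (inv_pos.mpr hγmin).le
    calc u = ((Aᵀ*A) * (Wᵀ*W)).trace := c1
      _ ≤ γmax * (Wᵀ*W).trace := stepAle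
      _ ≤ γmax * (γmin⁻¹ * L₀^2) := mul_le_mul_of_nonneg_left c2 hγmax.le
  -- combine
  have hsu : Real.sqrt u ≤ L₀ * Real.sqrt γmax / Real.sqrt γmin := by
    have h1 : Real.sqrt u ≤ Real.sqrt (γmax * (γmin⁻¹ * L₀^2)) := Real.sqrt_le_sqrt hu
    rw [Real.sqrt_mul hγmax.le, Real.sqrt_mul (inv_nonneg.mpr hγmin.le),
      Real.sqrt_sq hL₀, Real.sqrt_inv] at h1
    have hsγ : (0:ℝ) < Real.sqrt γmin := Real.sqrt_pos.mpr hγmin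
    calc Real.sqrt u ≤ Real.sqrt γmax * ((Real.sqrt γmin)⁻¹ * L₀) := h1
      _ = L₀ * Real.sqrt γmax / Real.sqrt γmin := by
        rw [div_eq_mul_inv]; ring
  have hfrob : frobNorm X = Real.sqrt t := by
    rw [htdef, trace_tmul_self]; rfl
  have hst2 : (Real.sqrt t)^2 = t := Real.sq_sqrt ht0
  have hsγ : (0:ℝ) < Real.sqrt γmin := Real.sqrt_pos.mpr hγmin
  have hrpow : γmin ^ ((3:ℝ)/2) = γmin * Real.sqrt γmin := by
    rw [show (3:ℝ)/2 = 1 + 1/2 by norm_num, Real.rpow_add hγmin, Real.rpow_one,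
      ← Real.sqrt_eq_rpow]
  rw [hfrob, hrpow]
  have hKeq : (L₀ * Real.sqrt γmax / Real.sqrt γmin) / (2 * γmin)
      = L₀ * Real.sqrt γmax / (2 * (γmin * Real.sqrt γmin)) := by
    rw [div_div, show Real.sqrt γmin * (2 * γmin) = 2 * (γmin * Real.sqrt γmin) from by ring]
  rcases eq_or_lt_of_le (Real.sqrt_nonneg t) with h0 | h0
  · rw [← h0]; positivity
  · have hchain : 4 * γmin * ((Real.sqrt t)^2)
        ≤ 2 * Real.sqrt t * (L₀ * Real.sqrt γmax / Real.sqrt γmin) := by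
      rw [hst2]
      have h2 : 2 * Real.sqrt t * Real.sqrt u
          ≤ 2 * Real.sqrt t * (L₀ * Real.sqrt γmax / Real.sqrt γmin) :=
        mul_le_mul_of_nonneg_left hsu (by positivity)
      linarith
    rw [← hKeq]
    exact final_arith hγmin h0 (by positivity) hchain
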